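/- Let a : ℕ → ℤ, let α_1, …, α_r be distinct nonzero complex numbers and λ_1, …, λ_r ∈ ℂ[X] polynomials such that a(n) = λ_1(n)·α_1^n + ⋯ + λ_r(n)·α_r^n for all n ≥ 1. If λ_1 is not the zero polynomial, |α_1| > 1, and |α_i| < |α_1| for every i ≥ 2 such that λ_i is not the zero polynomial, then α_1 is a real number. -/

import Mathlib

open Polynomial

open Filter Complex

lemma inv_nat_tendsto : Filter.Tendsto (fun n : ℕ => ((n : ℂ))⁻¹) atTop (nhds 0) := by
  have h : Filter.Tendsto (fun n : ℕ => ((n : ℝ))⁻¹) atTop (nhds 0) :=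
    tendsto_inv_atTop_zero.comp tendsto_natCast_atTop_atTop
  have := (Complex.continuous_ofReal.tendsto 0).comp h
  simpa [Function.comp_def, Complex.ofReal_inv] using this

lemma pow_geom_tendsto {β : ℂ} (hβ : ‖β‖ < 1) (k : ℕ) :
    Filter.Tendsto (fun n : ℕ => (n : ℂ) ^ k * β ^ n) atTop (nhds 0) :=
  (summable_pow_mul_geometric_of_norm_lt_one k hβ).tendsto_atTop_zero

lemma lemB (p : ℂ[X]) {β : ℂ} (hβ : ‖β‖ < 1) :
    Filter.Tendsto (fun n : ℕ => p.eval (n : ℂ) * β ^ n) atTop (nhds 0) := by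
  have h : ∀ n : ℕ, p.eval (n : ℂ) * β ^ n
      = ∑ i ∈ Finset.range (p.natDegree + 1), p.coeff i * ((n : ℂ) ^ i * β ^ n) := by
    intro n
    rw [eval_eq_sum_range, Finset.sum_mul]
    simp [mul_assoc]
  simp only [h]
  have : Filter.Tendsto
      (fun n : ℕ => ∑ i ∈ Finset.range (p.natDegree + 1), p.coeff i * ((n : ℂ) ^ i * β ^ n))
      atTop (nhds (∑ i ∈ Finset.range (p.natDegree + 1), (0 : ℂ))) := by
    apply tendsto_finset_sum
    intro i _
    simpa using (pow_geom_tendsto hβ i).const_mul (p.coeff i)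
  simpa using this

lemma lemA (p : ℂ[X]) :
    Filter.Tendsto (fun n : ℕ => p.eval (n : ℂ) / (n : ℂ) ^ p.natDegree) atTop
      (nhds p.leadingCoeff) := by
  set d := p.natDegree with hd
  have h : ∀ᶠ n : ℕ in atTop, p.eval (n : ℂ) / (n : ℂ) ^ d
      = ∑ i ∈ Finset.range (d + 1), p.coeff i * ((n : ℂ) ^ i / (n : ℂ) ^ d) := by
    filter_upwards [eventually_ge_atTop 1] with n hn
    rw [eval_eq_sum_range, Finset.sum_div]
    simp [mul_div_assoc]
    rfl
  rw [Filter.tendsto_congr' h]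
  have key : Filter.Tendsto
      (fun n : ℕ => ∑ i ∈ Finset.range (d + 1), p.coeff i * ((n : ℂ) ^ i / (n : ℂ) ^ d))
      atTop (nhds (∑ i ∈ Finset.range (d + 1), if i = d then p.coeff d else 0)) := by
    apply tendsto_finset_sum
    intro i hi
    rcases eq_or_lt_of_le (Nat.lt_succ_iff.mp (Finset.mem_range.mp hi)) with he | hlt
    · simp only [he, if_pos rfl]
      apply Filter.Tendsto.congr' _ tendsto_const_nhds
      filter_upwards [eventually_ge_atTop 1] with n hn
      have hn0 : (n : ℂ) ≠ 0 := by
        exact_mod_cast Nat.cast_ne_zero.mpr (by omega)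
      rw [div_self (pow_ne_zero _ hn0), mul_one]
      simp
    · simp only [if_neg (Nat.ne_of_lt hlt)]
      have heq : ∀ᶠ n : ℕ in atTop,
          p.coeff i * ((n : ℂ) ^ i / (n : ℂ) ^ d) = p.coeff i * ((n : ℂ)⁻¹) ^ (d - i) := by
        filter_upwards [eventually_ge_atTop 1] with n hn
        have hn0 : (n : ℂ) ≠ 0 := by exact_mod_cast Nat.cast_ne_zero.mpr (by omega)
        congr 1
        rw [inv_pow]
        rw [div_eq_iff (pow_ne_zero _ hn0), inv_mul_eq_div, eq_div_iff (pow_ne_zero _ hn0),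
          ← pow_add]
        congr 1
        omega
      rw [Filter.tendsto_congr' heq]
      have := ((inv_nat_tendsto).pow (d - i)).const_mul (p.coeff i)
      simpa only [zero_pow (Nat.sub_ne_zero_of_lt hlt), mul_zero] using this
  have hsum : (∑ i ∈ Finset.range (d + 1), if i = d then p.coeff d else 0) = p.leadingCoeff := by
    rw [Finset.sum_ite_eq' (Finset.range (d + 1)) d (fun _ => p.coeff d),
      if_pos (Finset.self_mem_range_succ d)]
    rfl
  rw [← hsum]
  exact key

lemma im_mul_conj (z w : ℂ) :
    (z * (starRingEnd ℂ) w).im = z.im * w.re - z.re * w.im := by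
  simp [Complex.mul_im]
  ring


/-- If an integer sequence has a generalized power-sum representation
`a n = ∑ i, λ i (n) · (α i)^n` with distinct nonzero `α i`, in which the coefficient `λ 1` of the
first root is nonzero, `|α 1| > 1`, and every other root actually occurring (i.e. with nonzero
coefficient) has modulus strictly smaller than `|α 1|`, then the dominant root `α 1` is real. -/
theorem dominant_root_is_real (a : ℕ → ℤ) (r : ℕ) (hr : 0 < r)
    (α : Fin r → ℂ) (lam : Fin r → Polynomial ℂ)
    (hinj : Function.Injective α) (hα0 : ∀ i : Fin r, α i ≠ 0)
    (hrep : ∀ n : ℕ, 1 ≤ n → (a n : ℂ) = ∑ i : Fin r, (lam i).eval (n : ℂ) * α i ^ n)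
    (hlam1 : lam ⟨0, hr⟩ ≠ 0)
    (habs1 : 1 < ‖α ⟨0, hr⟩‖)
    (hdom : ∀ i : Fin r, i ≠ ⟨0, hr⟩ → lam i ≠ 0 →
      ‖α i‖ < ‖α ⟨0, hr⟩‖) :
    ∃ x : ℝ, α ⟨0, hr⟩ = (x : ℂ) := by
  classical
  set i0 : Fin r := ⟨0, hr⟩ with hi0
  set p : ℂ[X] := lam i0 with hp
  set ρ : ℝ := ‖α i0‖ with hρ
  have hρ0 : (0 : ℝ) < ρ := lt_trans one_pos habs1
  have hρc : ((ρ : ℝ) : ℂ) ≠ 0 := by exact_mod_cast ne_of_gt hρ0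
  set u : ℂ := α i0 / (ρ : ℂ) with hudef
  have hu : ‖u‖ = 1 := by
    rw [hudef, norm_div, Complex.norm_real, Real.norm_eq_abs, abs_of_pos hρ0, ← hρ, div_self (ne_of_gt hρ0)]
  have hun : ∀ n : ℕ, ‖u ^ n‖ = 1 := by
    intro n; rw [norm_pow, hu, one_pow]
  set d : ℕ := p.natDegree with hdd
  set c : ℂ := p.leadingCoeff with hcc
  have hc : c ≠ 0 := leadingCoeff_ne_zero.mpr hlam1
  set R : ℕ → ℂ := fun n => ∑ i ∈ Finset.univ.erase i0, (lam i).eval (n : ℂ) * α i ^ n with hRdef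
  set T : ℕ → ℝ := fun n => (n : ℝ) ^ d * ρ ^ n with hTdef
  have hT : ∀ n : ℕ, ((T n : ℝ) : ℂ) = (n : ℂ) ^ d * ((ρ : ℝ) : ℂ) ^ n := by
    intro n
    rw [hTdef]
    push_cast
    ring
  -- split the representation
  have hsplit : ∀ n : ℕ, 1 ≤ n → (a n : ℂ) = p.eval (n : ℂ) * α i0 ^ n + R n := by
    intro n hn
    rw [hrep n hn, ← Finset.add_sum_erase _ _ (Finset.mem_univ i0)]
  -- remainder tends to zero after dividing by ρ^n
  have hR0 : Filter.Tendsto (fun n : ℕ => R n / ((ρ : ℝ) : ℂ) ^ n) atTop (nhds 0) := by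
    have heq : ∀ n : ℕ, R n / ((ρ : ℝ) : ℂ) ^ n
        = ∑ i ∈ Finset.univ.erase i0, (lam i).eval (n : ℂ) * (α i / ((ρ : ℝ) : ℂ)) ^ n := by
      intro n
      rw [hRdef, Finset.sum_div]
      refine Finset.sum_congr rfl fun i _ => ?_
      rw [div_pow, mul_div_assoc]
    simp only [heq]
    have h0 : Filter.Tendsto
        (fun n : ℕ => ∑ i ∈ Finset.univ.erase i0, (lam i).eval (n : ℂ) * (α i / ((ρ : ℝ) : ℂ)) ^ n)
        atTop (nhds (∑ i ∈ Finset.univ.erase i0, (0 : ℂ))) := by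
      apply tendsto_finset_sum
      intro i hi
      by_cases hli : lam i = 0
      · simp [hli]
      · have hβ : ‖α i / ((ρ : ℝ) : ℂ)‖ < 1 := by
          rw [norm_div, Complex.norm_real, Real.norm_eq_abs, abs_of_pos hρ0]
          rw [div_lt_one hρ0]
          exact hdom i (Finset.ne_of_mem_erase hi) hli
        exact lemB (lam i) hβ
    simpa using h0
  -- remainder tends to zero after dividing by T n
  have hRd : Filter.Tendsto (fun n : ℕ => R n / ((T n : ℝ) : ℂ)) atTop (nhds 0) := by
    apply squeeze_zero_norm' (a := fun n : ℕ => ‖R n / ((ρ : ℝ) : ℂ) ^ n‖)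
    · filter_upwards [Filter.eventually_ge_atTop 1] with n hn
      have h1 : (1 : ℝ) ≤ ‖(n : ℂ) ^ d‖ := by
        rw [norm_pow]
        apply one_le_pow₀
        rw [Complex.norm_natCast]
        exact_mod_cast hn
      calc ‖R n / ((T n : ℝ) : ℂ)‖ = ‖R n / ((ρ : ℝ) : ℂ) ^ n‖ / ‖(n : ℂ) ^ d‖ := by
            rw [hT, norm_div, norm_mul, norm_div]; ring
        _ ≤ ‖R n / ((ρ : ℝ) : ℂ) ^ n‖ := div_le_self (norm_nonneg _) h1
    · exact tendsto_zero_iff_norm_tendsto_zero.mp hR0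
  -- leading term
  have hL : Filter.Tendsto
      (fun n : ℕ => p.eval (n : ℂ) * α i0 ^ n / ((T n : ℝ) : ℂ) - c * u ^ n) atTop (nhds 0) := by
    apply squeeze_zero_norm' (a := fun n : ℕ => ‖p.eval (n : ℂ) / (n : ℂ) ^ d - c‖)
    · filter_upwards [Filter.eventually_ge_atTop 1] with n hn
      have hn0 : (n : ℂ) ≠ 0 := by exact_mod_cast Nat.cast_ne_zero.mpr (by omega)
      have hkey : p.eval (n : ℂ) * α i0 ^ n / ((T n : ℝ) : ℂ) - c * u ^ n
          = (p.eval (n : ℂ) / (n : ℂ) ^ d - c) * u ^ n := by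
        rw [hT, hudef, div_pow]
        field_simp
      rw [hkey, norm_mul]
      have : ‖u ^ n‖ = 1 := by rw [hun]
      rw [this, mul_one]
    · have h1 := (lemA p).sub_const c
      simp only [← hcc, sub_self] at h1
      exact tendsto_zero_iff_norm_tendsto_zero.mp h1
  -- imaginary parts
  have hs : Filter.Tendsto (fun n : ℕ => (c * u ^ n).im) atTop (nhds 0) := by
    have h1 : Filter.Tendsto
        (fun n : ℕ => (p.eval (n : ℂ) * α i0 ^ n / ((T n : ℝ) : ℂ) - c * u ^ n).im)
        atTop (nhds 0) := by
      have := (Complex.continuous_im.tendsto 0).comp hL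
      simpa only [Function.comp_def, Complex.zero_im] using this
    have h2 : Filter.Tendsto (fun n : ℕ => (R n / ((T n : ℝ) : ℂ)).im) atTop (nhds 0) := by
      have := (Complex.continuous_im.tendsto 0).comp hRd
      simpa only [Function.comp_def, Complex.zero_im] using this
    have h3 := (h1.neg).sub h2
    rw [neg_zero, sub_zero] at h3
    apply h3.congr'
    filter_upwards [Filter.eventually_ge_atTop 1] with n hn
    have him : (p.eval (n : ℂ) * α i0 ^ n).im = -(R n).im := by
      have := congrArg Complex.im (hsplit n hn)
      simp only [Complex.intCast_im, Complex.add_im] at this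
      linarith
    rw [Complex.sub_im, Complex.div_ofReal_im, Complex.div_ofReal_im, him]
    ring
  -- the constant sequence trick
  have hconst : ∀ n : ℕ,
      ((c * u ^ (n + 1)) * (starRingEnd ℂ) (c * u ^ n)).im = Complex.normSq c * u.im := by
    intro n
    have hu0 : u ≠ 0 := by
      intro h; rw [h] at hu; simp at hu
    have hconj : (starRingEnd ℂ) u = u⁻¹ := (Complex.inv_eq_conj hu).symm
    have : (c * u ^ (n + 1)) * (starRingEnd ℂ) (c * u ^ n)
        = ((Complex.normSq c : ℝ) : ℂ) * u := by
      rw [map_mul, map_pow, hconj, ← Complex.mul_conj]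
      rw [inv_pow, pow_succ]
      field_simp
    rw [this]
    simp [Complex.mul_im]
  have hF : Filter.Tendsto
      (fun n : ℕ => ((c * u ^ (n + 1)) * (starRingEnd ℂ) (c * u ^ n)).im) atTop (nhds 0) := by
    have habs : ∀ m : ℕ, ‖c * u ^ m‖ = ‖c‖ := by
      intro m; rw [norm_mul, hun, mul_one]
    have hshift : Filter.Tendsto (fun n : ℕ => (c * u ^ (n + 1)).im) atTop (nhds 0) := by
      exact hs.comp (Filter.tendsto_add_atTop_nat 1)
    have ht1 : Filter.Tendsto (fun n : ℕ => (c * u ^ (n + 1)).im * (c * u ^ n).re)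
        atTop (nhds 0) := by
      apply squeeze_zero_norm' (a := fun n : ℕ => |(c * u ^ (n + 1)).im| * ‖c‖)
      · filter_upwards with n
        rw [Real.norm_eq_abs, abs_mul]
        apply mul_le_mul_of_nonneg_left _ (abs_nonneg _)
        rw [← habs n]
        exact Complex.abs_re_le_norm _
      · have := (hshift.abs).mul_const ‖c‖
        simpa using this
    have ht2 : Filter.Tendsto (fun n : ℕ => (c * u ^ (n + 1)).re * (c * u ^ n).im)
        atTop (nhds 0) := by
      apply squeeze_zero_norm' (a := fun n : ℕ => ‖c‖ * |(c * u ^ n).im|)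
      · filter_upwards with n
        rw [Real.norm_eq_abs, abs_mul]
        apply mul_le_mul_of_nonneg_right _ (abs_nonneg _)
        rw [← habs (n + 1)]
        exact Complex.abs_re_le_norm _
      · have := (hs.abs).const_mul ‖c‖
        simpa using this
    have := ht1.sub ht2
    rw [sub_zero] at this
    apply this.congr
    intro n
    rw [im_mul_conj]
  have huim : u.im = 0 := by
    have heq : Complex.normSq c * u.im = 0 := by
      have h1 : Filter.Tendsto
          (fun _ : ℕ => Complex.normSq c * u.im) atTop (nhds (Complex.normSq c * u.im)) :=
        tendsto_const_nhds
      have h2 : Filter.Tendsto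
          (fun n : ℕ => ((c * u ^ (n + 1)) * (starRingEnd ℂ) (c * u ^ n)).im) atTop
          (nhds (Complex.normSq c * u.im)) := by
        apply h1.congr; intro n; rw [hconst n]
      exact tendsto_nhds_unique h2 hF
    have hnsq : Complex.normSq c ≠ 0 := ne_of_gt (Complex.normSq_pos.mpr hc)
    exact (mul_eq_zero.mp heq).resolve_left hnsq
  refine ⟨(α i0).re, ?_⟩
  apply Complex.ext
  · simp
  · have : (α i0 / ((ρ : ℝ) : ℂ)).im = 0 := huim
    rw [Complex.div_ofReal_im] at this
    have := (div_eq_zero_iff.mp this).resolve_right (ne_of_gt hρ0)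
    simpa using this
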